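/- Let f : ℝ × (0, ∞) → ℝ be continuous and satisfy: (a) for every 0 < a < b there is L > 0 with |f(x, r₁) − f(x, r₂)| ≤ L|r₁ − r₂| for all x ∈ ℝ and r₁, r₂ ∈ [a, b]; (b) there exist δ > 0 and c > 0 with f(x, r) ≤ −c/(2r) for all x ∈ ℝ and 0 < r < δ; (c) there exists R₀ > δ with f(x, r) ≥ 1/2 for all x ∈ ℝ and r ≥ R₀; (d) there exists K > 0 with |f(x, r)| ≤ K for all x ∈ ℝ and r ≥ δ. For t ∈ ℝ let 𝓕⁺(t) denote the set of differentiable functions r : [t, ∞) → (0, ∞) with r′(x) = f(x, r(x)) for all x ≥ t and r(x) → +∞ as x → +∞. Then there exist constants 0 < m ≤ M and a differentiable function R⁺ : ℝ → ℝ with m ≤ R⁺(x) ≤ M and R⁺′(x) = f(x, R⁺(x)) for all x ∈ ℝ, such that for every t ∈ ℝ, R⁺(t) = inf { r(t) : r ∈ 𝓕⁺(t) }. -/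

import Mathlib

set_option maxHeartbeats 1000000

open Filter

/-- The family `𝓕⁺(t)` of positive solutions of `r' = f(x, r)` on `[t, ∞)`
escaping to `+∞` (outgoing characteristics reaching spatial infinity). -/
def escapingSolutions (f : ℝ → ℝ → ℝ) (t : ℝ) : Set (ℝ → ℝ) :=
  {r | (∀ x ∈ Set.Ici t, 0 < r x) ∧
       (∀ x ∈ Set.Ici t, HasDerivWithinAt r (f x (r x)) (Set.Ici t) x) ∧
       Tendsto r atTop atTop}

namespace BHaux
open Set Topology


/-- clamp to `[a,b]` -/
def clamp (a b r : ℝ) : ℝ := max a (min r b)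

lemma clamp_mem {a b : ℝ} (hab : a ≤ b) (r : ℝ) : clamp a b r ∈ Icc a b := by
  constructor
  · exact le_max_left _ _
  · exact max_le hab (min_le_right _ _)

lemma clamp_of_mem {a b r : ℝ} (h : r ∈ Icc a b) : clamp a b r = r := by
  have : min r b = r := min_eq_left h.2
  rw [clamp, this, max_eq_right h.1]

lemma clamp_dist {a b : ℝ} (r₁ r₂ : ℝ) : |clamp a b r₁ - clamp a b r₂| ≤ |r₁ - r₂| := by
  unfold clamp
  rcases le_total r₁ b with h1 | h1 <;> rcases le_total r₂ b with h2 | h2 <;>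
    rcases le_total a r₁ with h3 | h3 <;> rcases le_total a r₂ with h4 | h4 <;>
    simp [min_def, max_def] <;> split_ifs <;> rw [abs_le] <;>
    constructor <;> rcases abs_cases (r₁ - r₂) with ⟨he, _⟩ | ⟨he, _⟩ <;> linarith

/-- fencing: stay below a constant barrier, initial-value version -/
lemma barrier_below {u ψ : ℝ → ℝ} {p q θ : ℝ}
    (hu : ∀ x ∈ Icc p q, HasDerivWithinAt u (ψ x) (Icc p q) x)
    (h0 : u p ≤ θ) (hb : ∀ x ∈ Icc p q, u x = θ → ψ x < 0) :
    ∀ x ∈ Icc p q, u x ≤ θ := by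
  have hcont : ContinuousOn u (Icc p q) := fun x hx => (hu x hx).continuousWithinAt
  have hd : ∀ x ∈ Ico p q, HasDerivWithinAt u (ψ x) (Ici x) x := fun x hx =>
    (hu x (Ico_subset_Icc_self hx)).mono_of_mem_nhdsWithin (Icc_mem_nhdsGE_of_mem hx)
  intro x hx
  exact image_le_of_deriv_right_lt_deriv_boundary (B := fun _ => θ) (B' := fun _ => 0)
    hcont hd h0 (fun _ => hasDerivAt_const _ _)
    (fun y hy hyθ => hb y (Ico_subset_Icc_self hy) hyθ) hx

/-- fencing: stay above a constant barrier, initial-value version -/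
lemma barrier_above {u ψ : ℝ → ℝ} {p q θ : ℝ}
    (hu : ∀ x ∈ Icc p q, HasDerivWithinAt u (ψ x) (Icc p q) x)
    (h0 : θ ≤ u p) (hb : ∀ x ∈ Icc p q, u x = θ → 0 < ψ x) :
    ∀ x ∈ Icc p q, θ ≤ u x := by
  have := barrier_below (u := fun y => -u y) (ψ := fun y => -ψ y) (p := p) (q := q) (θ := -θ)
    (fun x hx => (hu x hx).neg) (by simpa using h0)
    (fun x hx hxe => by
      have hxe' : -u x = -θ := hxe
      have : u x = θ := by linarith
      show -ψ x < 0
      have := hb x hx this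
      linarith)
  intro x hx
  have h2 : -u x ≤ -θ := this x hx
  linarith

/-- reversal of time for a solution on an interval -/
lemma reverse_deriv {u ψ : ℝ → ℝ} {p q : ℝ}
    (hu : ∀ x ∈ Icc p q, HasDerivWithinAt u (ψ x) (Icc p q) x) :
    ∀ y ∈ Icc p q, HasDerivWithinAt (fun y => u (p + q - y))
      (-ψ (p + q - y)) (Icc p q) y := by
  intro y hy
  have hmem : p + q - y ∈ Icc p q := ⟨by linarith [hy.2], by linarith [hy.1]⟩
  have hinner : HasDerivWithinAt (fun y : ℝ => p + q - y) (-1) (Icc p q) y := by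
    simpa using ((hasDerivWithinAt_id y (Icc p q)).const_sub (p + q))
  have hmaps : MapsTo (fun y : ℝ => p + q - y) (Icc p q) (Icc p q) := by
    intro z hz
    simp only [mem_Icc] at hz ⊢
    constructor <;> linarith [hz.1, hz.2]
  have := (hu _ hmem).scomp y hinner hmaps
  simpa [mul_comm, Function.comp_def] using this

/-- fencing: stay below a constant barrier, terminal-value version -/
lemma barrier_below_term {u ψ : ℝ → ℝ} {p q θ : ℝ}
    (hu : ∀ x ∈ Icc p q, HasDerivWithinAt u (ψ x) (Icc p q) x)
    (h0 : u q ≤ θ) (hb : ∀ x ∈ Icc p q, u x = θ → 0 < ψ x) :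
    ∀ x ∈ Icc p q, u x ≤ θ := by
  rcases le_or_gt p q with hpq | hpq
  · have hrev := reverse_deriv hu
    have key := barrier_below (u := fun y => u (p + q - y)) (ψ := fun y => -ψ (p + q - y))
      (p := p) (q := q) hrev (by simpa using h0)
      (fun y hy hye => by
        have hmem : p + q - y ∈ Icc p q := ⟨by linarith [hy.2], by linarith [hy.1]⟩
        have hye' : u (p + q - y) = θ := hye
        have := hb _ hmem hye'
        show -ψ (p + q - y) < 0
        linarith)
    intro x hx
    have hmem : p + q - x ∈ Icc p q := ⟨by linarith [hx.2], by linarith [hx.1]⟩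
    have := key _ hmem
    simpa using this
  · intro x hx
    exact absurd (hx.1.trans hx.2) (not_le.mpr hpq)

/-- fencing: stay above a constant barrier, terminal-value version -/
lemma barrier_above_term {u ψ : ℝ → ℝ} {p q θ : ℝ}
    (hu : ∀ x ∈ Icc p q, HasDerivWithinAt u (ψ x) (Icc p q) x)
    (h0 : θ ≤ u q) (hb : ∀ x ∈ Icc p q, u x = θ → ψ x < 0) :
    ∀ x ∈ Icc p q, θ ≤ u x := by
  have := barrier_below_term (u := fun y => -u y) (ψ := fun y => -ψ y) (p := p) (q := q)
    (θ := -θ) (fun x hx => (hu x hx).neg) (by simpa using h0)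
    (fun x hx hxe => by
      have hxe' : -u x = -θ := hxe
      have : u x = θ := by linarith
      show 0 < -ψ x
      have := hb x hx this
      linarith)
  intro x hx
  have h2 : -u x ≤ -θ := this x hx
  linarith

/-- growth from a derivative lower bound -/
lemma deriv_growth {u ψ : ℝ → ℝ} {p q m : ℝ}
    (hu : ∀ x ∈ Icc p q, HasDerivWithinAt u (ψ x) (Icc p q) x)
    (hm : ∀ x ∈ Icc p q, m ≤ ψ x) :
    ∀ x ∈ Icc p q, u p + m * (x - p) ≤ u x := by
  have hcont : ContinuousOn u (Icc p q) := fun x hx => (hu x hx).continuousWithinAt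
  have hd : ∀ x ∈ Ico p q, HasDerivWithinAt u (ψ x) (Ici x) x := fun x hx =>
    (hu x (Ico_subset_Icc_self hx)).mono_of_mem_nhdsWithin (Icc_mem_nhdsGE_of_mem hx)
  intro x hx
  have := image_le_of_deriv_right_le_deriv_boundary (f := fun y => u p + m * (y - p))
    (f' := fun _ => m) (B := u) (B' := ψ)
    (Continuous.continuousOn (by continuity))
    (fun y _ => by
      simpa using (((hasDerivWithinAt_id y (Ici y)).sub_const p).const_mul m).const_add (u p))
    (by simp) hcont hd (fun y hy => hm y (Ico_subset_Icc_self hy)) hx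
  simpa using this

/-- Lipschitz bound from a derivative bound -/
lemma deriv_lip {u ψ : ℝ → ℝ} {p q K : ℝ}
    (hu : ∀ x ∈ Icc p q, HasDerivWithinAt u (ψ x) (Icc p q) x)
    (hb : ∀ x ∈ Icc p q, |ψ x| ≤ K) :
    ∀ x ∈ Icc p q, ∀ y ∈ Icc p q, |u y - u x| ≤ K * |y - x| := by
  intro x hx y hy
  rcases le_total x y with h | h
  · have sub : Icc x y ⊆ Icc p q := Icc_subset_Icc hx.1 hy.2
    have := norm_image_sub_le_of_norm_deriv_le_segment' (f := u) (f' := ψ) (C := K)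
      (a := x) (b := y) (fun z hz => (hu z (sub hz)).mono sub)
      (fun z hz => by simpa [Real.norm_eq_abs] using hb z (sub (Ico_subset_Icc_self hz)))
      y ⟨h, le_rfl⟩
    rw [Real.norm_eq_abs] at this
    calc |u y - u x| ≤ K * (y - x) := this
      _ = K * |y - x| := by rw [abs_of_nonneg (by linarith)]
  · have sub : Icc y x ⊆ Icc p q := Icc_subset_Icc hy.1 hx.2
    have := norm_image_sub_le_of_norm_deriv_le_segment' (f := u) (f' := ψ) (C := K)
      (a := y) (b := x) (fun z hz => (hu z (sub hz)).mono sub)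
      (fun z hz => by simpa [Real.norm_eq_abs] using hb z (sub (Ico_subset_Icc_self hz)))
      x ⟨h, le_rfl⟩
    rw [Real.norm_eq_abs] at this
    have h2 : |u y - u x| = |u x - u y| := abs_sub_comm _ _
    calc |u y - u x| = |u x - u y| := h2
      _ ≤ K * (x - y) := this
      _ = K * |y - x| := by rw [abs_sub_comm, abs_of_nonneg (by linarith)]












/-- Existence of solutions of the clamped ODE on an arbitrary compact interval. -/
lemma clamped_exists (f : ℝ → ℝ → ℝ)
    (hf : ContinuousOn (fun p : ℝ × ℝ => f p.1 p.2) (Set.univ ×ˢ Set.Ioi 0))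
    {δ K : ℝ} (hδ : 0 < δ) (hbdd : ∀ x r : ℝ, δ ≤ r → |f x r| ≤ K)
    {a b L : ℝ} (hδa : δ ≤ a) (hab : a ≤ b) (hL : 0 ≤ L)
    (hLip : ∀ x : ℝ, ∀ r₁ ∈ Icc a b, ∀ r₂ ∈ Icc a b, |f x r₁ - f x r₂| ≤ L * |r₁ - r₂|)
    (tMin t₀ tMax y₀ : ℝ) (ht₀ : t₀ ∈ Icc tMin tMax) :
    ∃ u : ℝ → ℝ, u t₀ = y₀ ∧ ∀ x ∈ Icc tMin tMax,
      HasDerivWithinAt u (f x (clamp a b (u x))) (Icc tMin tMax) x := by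
  have hK0 : 0 ≤ K := (abs_nonneg _).trans (hbdd t₀ a hδa)
  have hmax : 0 ≤ max (tMax - t₀) (t₀ - tMin) :=
    le_trans (by linarith [ht₀.2] : (0:ℝ) ≤ tMax - t₀) (le_max_left _ _)
  have hclamp_pos : ∀ r : ℝ, 0 < clamp a b r := fun r =>
    lt_of_lt_of_le (lt_of_lt_of_le hδ hδa) (clamp_mem hab r).1
  have hclamp_δ : ∀ r : ℝ, δ ≤ clamp a b r := fun r => hδa.trans (clamp_mem hab r).1
  have hpl : IsPicardLindelof (fun t r => f t (clamp a b r)) (⟨t₀, ht₀⟩ : Icc tMin tMax) y₀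
      (K * max (tMax - t₀) (t₀ - tMin)).toNNReal 0 K.toNNReal L.toNNReal := by
    constructor
    · intro t _
      apply LipschitzOnWith.of_dist_le_mul
      intro r₁ _ r₂ _
      rw [Real.dist_eq, Real.dist_eq, Real.coe_toNNReal _ hL]
      calc |f t (clamp a b r₁) - f t (clamp a b r₂)|
          ≤ L * |clamp a b r₁ - clamp a b r₂| :=
            hLip t _ (clamp_mem hab r₁) _ (clamp_mem hab r₂)
        _ ≤ L * |r₁ - r₂| := mul_le_mul_of_nonneg_left (clamp_dist _ _) hL
    · intro r _
      have : ContinuousOn ((fun p : ℝ × ℝ => f p.1 p.2) ∘ (fun t : ℝ => (t, clamp a b r)))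
          (Icc tMin tMax) := by
        apply hf.comp (Continuous.continuousOn (by continuity))
        intro t _
        exact ⟨mem_univ _, hclamp_pos r⟩
      exact this
    · intro t _ r _
      rw [Real.norm_eq_abs, Real.coe_toNNReal _ hK0]
      exact hbdd t _ (hclamp_δ r)
    · simp only [tsub_zero, NNReal.coe_zero, sub_zero, Real.coe_toNNReal _ hK0,
        Real.coe_toNNReal _ (mul_nonneg hK0 hmax), le_refl]
  exact hpl.exists_eq_forall_mem_Icc_hasDerivWithinAt₀





/-- The global solution through `(T, R₀)`. -/
lemma exists_global_sol (f : ℝ → ℝ → ℝ)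
    (hf : ContinuousOn (fun p : ℝ × ℝ => f p.1 p.2) (Set.univ ×ˢ Set.Ioi 0))
    (hlip : ∀ a b : ℝ, 0 < a → a < b → ∃ L > 0, ∀ x : ℝ,
      ∀ r₁ ∈ Set.Icc a b, ∀ r₂ ∈ Set.Icc a b, |f x r₁ - f x r₂| ≤ L * |r₁ - r₂|)
    {δ δ' K R₀ : ℝ} (hδ : 0 < δ) (hδδ' : δ ≤ δ') (hδ'R₀ : δ' < R₀)
    (hnegδ' : ∀ x : ℝ, f x δ' < 0)
    (hlarge : ∀ x r : ℝ, R₀ ≤ r → (1 : ℝ) / 2 ≤ f x r)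
    (hK : 0 < K) (hbdd : ∀ x r : ℝ, δ ≤ r → |f x r| ≤ K) (T : ℝ) :
    ∃ ρ : ℝ → ℝ, ρ T = R₀ ∧ (∀ x, HasDerivAt ρ (f x (ρ x)) x) ∧
      (∀ x, x ≤ T → δ' ≤ ρ x ∧ ρ x ≤ R₀) ∧
      (∀ x, T ≤ x → R₀ + (x - T) / 2 ≤ ρ x ∧ ρ x ≤ R₀ + K * (x - T)) := by
  have hδ' : 0 < δ' := lt_of_lt_of_le hδ hδδ'
  have hδR₀ : δ ≤ R₀ := by linarith
  obtain ⟨L₀, hL₀pos, hL₀⟩ := hlip δ' R₀ hδ' hδ'R₀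
  -- backward solutions
  choose U hU0 hUd using fun k : ℕ =>
    clamped_exists f hf hδ hbdd hδδ' hδ'R₀.le hL₀pos.le hL₀
      (T - ((k : ℝ) + 1)) T T R₀
      ⟨by have : (0:ℝ) ≤ (k : ℝ) := Nat.cast_nonneg k; linarith, le_rfl⟩
  have hUband : ∀ k : ℕ, ∀ x ∈ Icc (T - ((k : ℝ) + 1)) T, δ' ≤ U k x ∧ U k x ≤ R₀ := by
    intro k
    have hup := barrier_below_term (θ := R₀) (hUd k) (le_of_eq (hU0 k))
      (fun x hx he => by
        rw [he, clamp_of_mem ⟨hδ'R₀.le, le_rfl⟩]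
        linarith [hlarge x R₀ le_rfl])
    have hlo := barrier_above_term (θ := δ') (hUd k) (by rw [hU0 k]; exact hδ'R₀.le)
      (fun x hx he => by
        rw [he, clamp_of_mem ⟨le_rfl, hδ'R₀.le⟩]
        exact hnegδ' x)
    exact fun x hx => ⟨hlo x hx, hup x hx⟩
  have hUd' : ∀ k : ℕ, ∀ x ∈ Icc (T - ((k : ℝ) + 1)) T,
      HasDerivWithinAt (U k) (f x (U k x)) (Icc (T - ((k : ℝ) + 1)) T) x := by
    intro k x hx
    have h := hUd k x hx
    rwa [clamp_of_mem ⟨(hUband k x hx).1, (hUband k x hx).2⟩] at h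
  -- forward solutions
  have hR₀pos : 0 < R₀ := lt_trans hδ' hδ'R₀
  have hBgt : ∀ k : ℕ, R₀ < R₀ + K * ((k : ℝ) + 1) + 1 := by
    intro k
    have : (0:ℝ) ≤ (k : ℝ) := Nat.cast_nonneg k
    nlinarith
  choose L hLpos hLspec using fun k : ℕ => hlip R₀ (R₀ + K * ((k : ℝ) + 1) + 1) hR₀pos (hBgt k)
  choose V hV0 hVd using fun k : ℕ =>
    clamped_exists f hf hδ hbdd hδR₀ (hBgt k).le (hLpos k).le (hLspec k)
      T T (T + ((k : ℝ) + 1)) R₀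
      ⟨le_rfl, by have : (0:ℝ) ≤ (k : ℝ) := Nat.cast_nonneg k; linarith⟩
  have hVlow : ∀ k : ℕ, ∀ x ∈ Icc T (T + ((k : ℝ) + 1)), R₀ ≤ V k x := by
    intro k
    exact barrier_above (θ := R₀) (hVd k) (le_of_eq (hV0 k).symm)
      (fun x hx he => by
        rw [he, clamp_of_mem ⟨le_rfl, (hBgt k).le⟩]
        linarith [hlarge x R₀ le_rfl])
  have hVup : ∀ k : ℕ, ∀ x ∈ Icc T (T + ((k : ℝ) + 1)), V k x ≤ R₀ + K * (x - T) := by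
    intro k x hx
    have hl := deriv_lip (hVd k) (fun y hy => hbdd y _ (hδR₀.trans (clamp_mem (hBgt k).le _).1))
      T ⟨le_rfl, by linarith [hx.1, hx.2]⟩ x hx
    have hxT : (0:ℝ) ≤ x - T := by linarith [hx.1]
    rw [hV0 k, abs_of_nonneg hxT] at hl
    linarith [(abs_le.mp hl).2]
  have hVmem : ∀ k : ℕ, ∀ x ∈ Icc T (T + ((k : ℝ) + 1)),
      V k x ∈ Icc R₀ (R₀ + K * ((k : ℝ) + 1) + 1) := by
    intro k x hx
    refine ⟨hVlow k x hx, ?_⟩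
    have h1 := hVup k x hx
    have h2 : K * (x - T) ≤ K * ((k : ℝ) + 1) :=
      mul_le_mul_of_nonneg_left (by linarith [hx.2]) hK.le
    linarith
  have hVd' : ∀ k : ℕ, ∀ x ∈ Icc T (T + ((k : ℝ) + 1)),
      HasDerivWithinAt (V k) (f x (V k x)) (Icc T (T + ((k : ℝ) + 1))) x := by
    intro k x hx
    have h := hVd k x hx
    rwa [clamp_of_mem (hVmem k x hx)] at h
  have hVgrow : ∀ k : ℕ, ∀ x ∈ Icc T (T + ((k : ℝ) + 1)), R₀ + (x - T) / 2 ≤ V k x := by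
    intro k x hx
    have := deriv_growth (m := (1:ℝ)/2) (hVd k) (fun y hy =>
      hlarge y _ (clamp_mem (hBgt k).le _).1) x hx
    rw [hV0 k] at this
    linarith [this]
  -- agreement of backward solutions
  have hL₀lip : ∀ t : ℝ, LipschitzOnWith L₀.toNNReal (fun r => f t (clamp δ' R₀ r)) univ := by
    intro t
    apply LipschitzOnWith.of_dist_le_mul
    intro r₁ _ r₂ _
    rw [Real.dist_eq, Real.dist_eq, Real.coe_toNNReal _ hL₀pos.le]
    calc |f t (clamp δ' R₀ r₁) - f t (clamp δ' R₀ r₂)|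
        ≤ L₀ * |clamp δ' R₀ r₁ - clamp δ' R₀ r₂| :=
          hL₀ t _ (clamp_mem hδ'R₀.le _) _ (clamp_mem hδ'R₀.le _)
      _ ≤ L₀ * |r₁ - r₂| := mul_le_mul_of_nonneg_left (clamp_dist _ _) hL₀pos.le
  have hUagree : ∀ k m : ℕ, k ≤ m → ∀ x ∈ Icc (T - ((k : ℝ) + 1)) T, U m x = U k x := by
    intro k m hkm
    have hkm' : T - ((m : ℝ) + 1) ≤ T - ((k : ℝ) + 1) := by
      have : (k : ℝ) ≤ (m : ℝ) := Nat.cast_le.mpr hkm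
      linarith
    have hsub : Icc (T - ((k : ℝ) + 1)) T ⊆ Icc (T - ((m : ℝ) + 1)) T :=
      Icc_subset_Icc hkm' le_rfl
    apply ODE_solution_unique_of_mem_Icc_left (v := fun t r => f t (clamp δ' R₀ r))
      (s := fun _ => univ) (K := L₀.toNNReal) (fun t _ => hL₀lip t)
    · exact fun x hx => ((hUd m x (hsub hx)).mono hsub).continuousWithinAt
    · intro t ht
      exact (hUd m t (hsub (Ioc_subset_Icc_self ht))).mono_of_mem_nhdsWithin
        (Icc_mem_nhdsLE_of_mem ⟨lt_of_le_of_lt hkm' ht.1, ht.2⟩)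
    · exact fun t _ => mem_univ _
    · exact fun x hx => (hUd k x hx).continuousWithinAt
    · intro t ht
      exact (hUd k t (Ioc_subset_Icc_self ht)).mono_of_mem_nhdsWithin
        (Icc_mem_nhdsLE_of_mem ht)
    · exact fun t _ => mem_univ _
    · rw [hU0 m, hU0 k]
  -- agreement of forward solutions
  have hVagree : ∀ k m : ℕ, k ≤ m → ∀ x ∈ Icc T (T + ((k : ℝ) + 1)), V m x = V k x := by
    intro k m hkm
    have hkm' : T + ((k : ℝ) + 1) ≤ T + ((m : ℝ) + 1) := by
      have : (k : ℝ) ≤ (m : ℝ) := Nat.cast_le.mpr hkm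
      linarith
    have hsub : Icc T (T + ((k : ℝ) + 1)) ⊆ Icc T (T + ((m : ℝ) + 1)) :=
      Icc_subset_Icc le_rfl hkm'
    have hlipk : ∀ t : ℝ, LipschitzOnWith (L k).toNNReal
        (fun r => f t (clamp R₀ (R₀ + K * ((k : ℝ) + 1) + 1) r)) univ := by
      intro t
      apply LipschitzOnWith.of_dist_le_mul
      intro r₁ _ r₂ _
      rw [Real.dist_eq, Real.dist_eq, Real.coe_toNNReal _ (hLpos k).le]
      calc |f t (clamp R₀ _ r₁) - f t (clamp R₀ _ r₂)|
          ≤ L k * |clamp R₀ _ r₁ - clamp R₀ _ r₂| :=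
            hLspec k t _ (clamp_mem (hBgt k).le _) _ (clamp_mem (hBgt k).le _)
        _ ≤ L k * |r₁ - r₂| := mul_le_mul_of_nonneg_left (clamp_dist _ _) (hLpos k).le
    -- V m solves the k-clamped equation on the common interval
    have hVmd : ∀ x ∈ Icc T (T + ((k : ℝ) + 1)),
        HasDerivWithinAt (V m) (f x (clamp R₀ (R₀ + K * ((k : ℝ) + 1) + 1) (V m x)))
          (Icc T (T + ((k : ℝ) + 1))) x := by
      intro x hx
      have h := (hVd' m x (hsub hx)).mono hsub
      have hmem : V m x ∈ Icc R₀ (R₀ + K * ((k : ℝ) + 1) + 1) := by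
        refine ⟨hVlow m x (hsub hx), ?_⟩
        have h1 := hVup m x (hsub hx)
        have h2 : K * (x - T) ≤ K * ((k : ℝ) + 1) :=
          mul_le_mul_of_nonneg_left (by linarith [hx.2]) hK.le
        linarith
      rw [clamp_of_mem hmem]
      exact h
    apply ODE_solution_unique_of_mem_Icc_right
      (v := fun t r => f t (clamp R₀ (R₀ + K * ((k : ℝ) + 1) + 1) r))
      (s := fun _ => univ) (K := (L k).toNNReal) (fun t _ => hlipk t)
    · exact fun x hx => (hVmd x hx).continuousWithinAt
    · intro t ht
      exact (hVmd t (Ico_subset_Icc_self ht)).mono_of_mem_nhdsWithin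
        (Icc_mem_nhdsGE_of_mem ht)
    · exact fun t _ => mem_univ _
    · exact fun x hx => (hVd k x hx).continuousWithinAt
    · intro t ht
      exact (hVd k t (Ico_subset_Icc_self ht)).mono_of_mem_nhdsWithin
        (Icc_mem_nhdsGE_of_mem ht)
    · exact fun t _ => mem_univ _
    · rw [hV0 m, hV0 k]
  -- the glued global solution
  set ρ : ℝ → ℝ := fun x => if x ≤ T then U ⌈T - x⌉₊ x else V ⌈x - T⌉₊ x with hρdef
  have hUdom : ∀ x : ℝ, x ≤ T → x ∈ Icc (T - ((⌈T - x⌉₊ : ℝ) + 1)) T := by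
    intro x hx
    have := Nat.le_ceil (T - x)
    exact ⟨by linarith, hx⟩
  have hVdom : ∀ x : ℝ, T ≤ x → x ∈ Icc T (T + ((⌈x - T⌉₊ : ℝ) + 1)) := by
    intro x hx
    have := Nat.le_ceil (x - T)
    exact ⟨hx, by linarith⟩
  have hρ_eq_U : ∀ k : ℕ, ∀ x ∈ Icc (T - ((k : ℝ) + 1)) T, ρ x = U k x := by
    intro k x hx
    have hxT : x ≤ T := hx.2
    have h1 := hUagree ⌈T - x⌉₊ (max k ⌈T - x⌉₊) (le_max_right _ _) x (hUdom x hxT)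
    have h2 := hUagree k (max k ⌈T - x⌉₊) (le_max_left _ _) x hx
    simp only [hρdef, if_pos hxT]
    exact h1.symm.trans h2
  have hρT : ρ T = R₀ := by
    have : (T : ℝ) ≤ T := le_rfl
    simp only [hρdef, if_pos this]
    exact hU0 _
  have hρ_eq_V : ∀ k : ℕ, ∀ x ∈ Icc T (T + ((k : ℝ) + 1)), ρ x = V k x := by
    intro k x hx
    rcases le_or_gt x T with h | h
    · have hxT : x = T := le_antisymm h hx.1
      rw [hxT, hρT, hV0 k]
    · have h1 := hVagree ⌈x - T⌉₊ (max k ⌈x - T⌉₊) (le_max_right _ _) x (hVdom x hx.1)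
      have h2 := hVagree k (max k ⌈x - T⌉₊) (le_max_left _ _) x hx
      simp only [hρdef, if_neg (not_le.mpr h)]
      exact h1.symm.trans h2
  have hρd : ∀ x : ℝ, HasDerivAt ρ (f x (ρ x)) x := by
    intro x
    rcases lt_trichotomy x T with hx | hx | hx
    · set k := ⌈T - x⌉₊ with hk
      have hceil := Nat.le_ceil (T - x)
      have hdom : x ∈ Icc (T - ((k : ℝ) + 1)) T := hUdom x hx.le
      have hint : Icc (T - ((k : ℝ) + 1)) T ∈ 𝓝 x := Icc_mem_nhds (by linarith) hx
      have hD : HasDerivAt (U k) (f x (U k x)) x := (hUd' k x hdom).hasDerivAt hint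
      have heq : ρ =ᶠ[𝓝 x] U k :=
        eventuallyEq_of_mem hint (fun y hy => hρ_eq_U k y hy)
      have h := hD.congr_of_eventuallyEq heq
      rwa [hρ_eq_U k x hdom]
    · subst hx
      have hdomU : x ∈ Icc (x - ((0 : ℕ) + 1 : ℝ)) x := ⟨by norm_num, le_rfl⟩
      have hdomV : x ∈ Icc x (x + ((0 : ℕ) + 1 : ℝ)) := ⟨le_rfl, by norm_num⟩
      have hIic : Icc (x - ((0 : ℕ) + 1 : ℝ)) x ∈ 𝓝[≤] x :=
        Icc_mem_nhdsLE_of_mem ⟨by norm_num, le_rfl⟩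
      have hIci : Icc x (x + ((0 : ℕ) + 1 : ℝ)) ∈ 𝓝[≥] x :=
        Icc_mem_nhdsGE_of_mem ⟨le_rfl, by norm_num⟩
      have h1 : HasDerivWithinAt ρ (f x R₀) (Iic x) x := by
        have h := (hUd' 0 x hdomU).mono_of_mem_nhdsWithin hIic
        rw [hU0 0] at h
        exact h.congr_of_eventuallyEq
          (eventuallyEq_of_mem hIic (fun y hy => hρ_eq_U 0 y hy))
          (by rw [hρT, hU0 0])
      have h2 : HasDerivWithinAt ρ (f x R₀) (Ici x) x := by
        have h := (hVd' 0 x hdomV).mono_of_mem_nhdsWithin hIci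
        rw [hV0 0] at h
        exact h.congr_of_eventuallyEq
          (eventuallyEq_of_mem hIci (fun y hy => hρ_eq_V 0 y hy))
          (by rw [hρT, hV0 0])
      have h3 := h1.union h2
      rw [Iic_union_Ici, hasDerivWithinAt_univ] at h3
      rwa [hρT]
    · set k := ⌈x - T⌉₊ with hk
      have hceil := Nat.le_ceil (x - T)
      have hdom : x ∈ Icc T (T + ((k : ℝ) + 1)) := hVdom x hx.le
      have hint : Icc T (T + ((k : ℝ) + 1)) ∈ 𝓝 x := Icc_mem_nhds hx (by linarith)
      have hD : HasDerivAt (V k) (f x (V k x)) x := (hVd' k x hdom).hasDerivAt hint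
      have heq : ρ =ᶠ[𝓝 x] V k :=
        eventuallyEq_of_mem hint (fun y hy => hρ_eq_V k y hy)
      have h := hD.congr_of_eventuallyEq heq
      rwa [hρ_eq_V k x hdom]
  refine ⟨ρ, hρT, hρd, ?_, ?_⟩
  · intro x hx
    rw [hρ_eq_U ⌈T - x⌉₊ x (hUdom x hx)]
    exact hUband _ x (hUdom x hx)
  · intro x hx
    rw [hρ_eq_V ⌈x - T⌉₊ x (hVdom x hx)]
    exact ⟨hVgrow _ x (hVdom x hx), hVup _ x (hVdom x hx)⟩




/-- uniqueness wrapper, forward version -/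
lemma uniq_on (f : ℝ → ℝ → ℝ)
    (hlip : ∀ a b : ℝ, 0 < a → a < b → ∃ L > 0, ∀ x : ℝ,
      ∀ r₁ ∈ Set.Icc a b, ∀ r₂ ∈ Set.Icc a b, |f x r₁ - f x r₂| ≤ L * |r₁ - r₂|)
    {lo hi a b : ℝ} (hlo : 0 < lo) (hlohi : lo < hi) {g₁ g₂ : ℝ → ℝ}
    (hg₁c : ContinuousOn g₁ (Icc a b))
    (hg₁ : ∀ x ∈ Ico a b, HasDerivWithinAt g₁ (f x (g₁ x)) (Ici x) x)
    (hg₁m : ∀ x ∈ Ico a b, g₁ x ∈ Icc lo hi)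
    (hg₂c : ContinuousOn g₂ (Icc a b))
    (hg₂ : ∀ x ∈ Ico a b, HasDerivWithinAt g₂ (f x (g₂ x)) (Ici x) x)
    (hg₂m : ∀ x ∈ Ico a b, g₂ x ∈ Icc lo hi)
    (heq : g₁ a = g₂ a) : EqOn g₁ g₂ (Icc a b) := by
  obtain ⟨L, hLpos, hL⟩ := hlip lo hi hlo hlohi
  have hv : ∀ t : ℝ, LipschitzOnWith L.toNNReal (f t) (Icc lo hi) := by
    intro t
    apply LipschitzOnWith.of_dist_le_mul
    intro r₁ h₁ r₂ h₂
    rw [Real.dist_eq, Real.dist_eq, Real.coe_toNNReal _ hLpos.le]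
    exact hL t r₁ h₁ r₂ h₂
  exact ODE_solution_unique_of_mem_Icc_right (v := f) (s := fun _ => Icc lo hi)
    (fun t _ => hv t) hg₁c hg₁ hg₁m hg₂c hg₂ hg₂m heq

/-- uniqueness wrapper, backward version -/
lemma uniq_on_left (f : ℝ → ℝ → ℝ)
    (hlip : ∀ a b : ℝ, 0 < a → a < b → ∃ L > 0, ∀ x : ℝ,
      ∀ r₁ ∈ Set.Icc a b, ∀ r₂ ∈ Set.Icc a b, |f x r₁ - f x r₂| ≤ L * |r₁ - r₂|)
    {lo hi a b : ℝ} (hlo : 0 < lo) (hlohi : lo < hi) {g₁ g₂ : ℝ → ℝ}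
    (hg₁c : ContinuousOn g₁ (Icc a b))
    (hg₁ : ∀ x ∈ Ioc a b, HasDerivWithinAt g₁ (f x (g₁ x)) (Iic x) x)
    (hg₁m : ∀ x ∈ Ioc a b, g₁ x ∈ Icc lo hi)
    (hg₂c : ContinuousOn g₂ (Icc a b))
    (hg₂ : ∀ x ∈ Ioc a b, HasDerivWithinAt g₂ (f x (g₂ x)) (Iic x) x)
    (hg₂m : ∀ x ∈ Ioc a b, g₂ x ∈ Icc lo hi)
    (heq : g₁ b = g₂ b) : EqOn g₁ g₂ (Icc a b) := by
  obtain ⟨L, hLpos, hL⟩ := hlip lo hi hlo hlohi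
  have hv : ∀ t : ℝ, LipschitzOnWith L.toNNReal (f t) (Icc lo hi) := by
    intro t
    apply LipschitzOnWith.of_dist_le_mul
    intro r₁ h₁ r₂ h₂
    rw [Real.dist_eq, Real.dist_eq, Real.coe_toNNReal _ hLpos.le]
    exact hL t r₁ h₁ r₂ h₂
  exact ODE_solution_unique_of_mem_Icc_left (v := f) (s := fun _ => Icc lo hi)
    (fun t _ => hv t) hg₁c hg₁ hg₁m hg₂c hg₂ hg₂m heq



end BHaux

open BHaux Set Topology

/-- Theorem 4.2 (existence of the outer black hole horizon): for the outgoing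
characteristic ODE `r' = f(x₀, r)` with `f ≤ -c/(2r)` near `r = 0`, `f ≥ 1/2` for
large `r`, and `f` bounded away from `r = 0`, there is a global positive bounded
solution `R⁺` which at each time `t` equals the infimum of the values at `t` of
all solutions escaping to infinity. -/
theorem outer_black_hole_horizon_exists (f : ℝ → ℝ → ℝ)
    (hf : ContinuousOn (fun p : ℝ × ℝ => f p.1 p.2) (Set.univ ×ˢ Set.Ioi 0))
    (hlip : ∀ a b : ℝ, 0 < a → a < b → ∃ L > 0, ∀ x : ℝ,
      ∀ r₁ ∈ Set.Icc a b, ∀ r₂ ∈ Set.Icc a b, |f x r₁ - f x r₂| ≤ L * |r₁ - r₂|)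
    (δ c R₀ K : ℝ) (hδ : 0 < δ) (hc : 0 < c)
    (hsmall : ∀ x r : ℝ, 0 < r → r < δ → f x r ≤ -c / (2 * r))
    (hR₀ : δ < R₀) (hlarge : ∀ x r : ℝ, R₀ ≤ r → (1 : ℝ) / 2 ≤ f x r)
    (hK : 0 < K) (hbdd : ∀ x r : ℝ, δ ≤ r → |f x r| ≤ K) :
    ∃ m M : ℝ, 0 < m ∧ m ≤ M ∧
      ∃ R : ℝ → ℝ,
        (∀ x, m ≤ R x ∧ R x ≤ M) ∧
        (∀ x, HasDerivAt R (f x (R x)) x) ∧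
        ∀ t : ℝ, R t = sInf ((fun r : ℝ → ℝ => r t) '' escapingSolutions f t) := by
  classical
  -- Step 1: the barrier level δ'
  obtain ⟨L₁, hL₁pos, hL₁⟩ := hlip δ R₀ hδ hR₀
  set ε : ℝ := min (c / (4 * δ * L₁)) ((R₀ - δ) / 2) with hεdef
  have hεpos : 0 < ε := lt_min (by positivity) (by linarith)
  set δ' : ℝ := δ + ε with hδ'def
  have hδδ' : δ ≤ δ' := by simp only [hδ'def]; linarith
  have hδ'pos : 0 < δ' := by linarith
  have hδ'R₀ : δ' < R₀ := by
    have h := min_le_right (c / (4 * δ * L₁)) ((R₀ - δ) / 2)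
    simp only [hδ'def]
    have : ε ≤ (R₀ - δ) / 2 := h
    linarith
  -- f x δ ≤ -c/(2δ) by continuity
  have hfδ : ∀ x : ℝ, f x δ ≤ -c / (2 * δ) := by
    intro x
    have hcf : ContinuousOn (fun r => f x r) (Ioi (0:ℝ)) := by
      have : ContinuousOn ((fun p : ℝ × ℝ => f p.1 p.2) ∘ (fun r : ℝ => (x, r))) (Ioi 0) :=
        hf.comp (Continuous.continuousOn (by continuity)) (fun r hr => ⟨mem_univ _, hr⟩)
      exact this
    have hcont : ContinuousWithinAt (fun r => f x r) (Ioi 0) δ := hcf δ hδ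
    have hne : (𝓝[Ioo (0:ℝ) δ] δ).NeBot := by
      apply mem_closure_iff_nhdsWithin_neBot.mp
      rw [closure_Ioo (ne_of_lt hδ)]
      exact ⟨hδ.le, le_rfl⟩
    have h1 : Tendsto (fun r => f x r) (𝓝[Ioo (0:ℝ) δ] δ) (𝓝 (f x δ)) :=
      hcont.tendsto.mono_left (nhdsWithin_mono δ (fun r hr => hr.1))
    have h2 : Tendsto (fun r : ℝ => -c / (2 * r)) (𝓝[Ioo (0:ℝ) δ] δ) (𝓝 (-c / (2 * δ))) := by
      apply Tendsto.mono_left _ nhdsWithin_le_nhds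
      apply Tendsto.div tendsto_const_nhds
      · exact (continuous_const.mul continuous_id).tendsto δ
      · positivity
    exact le_of_tendsto_of_tendsto h1 h2
      (eventually_mem_nhdsWithin.mono (fun r hr => hsmall x r hr.1 hr.2))
  -- negativity at δ'
  have hnegδ' : ∀ x : ℝ, f x δ' < 0 := by
    intro x
    have hδ'mem : δ' ∈ Icc δ R₀ := ⟨hδδ', hδ'R₀.le⟩
    have hδmem : δ ∈ Icc δ R₀ := ⟨le_rfl, hR₀.le⟩
    have habs := hL₁ x δ' hδ'mem δ hδmem
    have hd : |δ' - δ| = ε := by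
      simp only [hδ'def]
      rw [add_sub_cancel_left, abs_of_pos hεpos]
    rw [hd] at habs
    have hup : f x δ' ≤ f x δ + L₁ * ε := by
      have := (abs_le.mp habs).2
      linarith
    have hεle : ε ≤ c / (4 * δ * L₁) := min_le_left _ _
    have hLε : L₁ * ε ≤ c / (4 * δ) := by
      have h2 : L₁ * ε ≤ L₁ * (c / (4 * δ * L₁)) := mul_le_mul_of_nonneg_left hεle hL₁pos.le
      have h3 : L₁ * (c / (4 * δ * L₁)) = c / (4 * δ) := by
        field_simp
      linarith
    have hcd : (0:ℝ) < c / (4 * δ) := by positivity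
    have hcd2 : c / (2 * δ) = 2 * (c / (4 * δ)) := by ring
    have := hfδ x
    have hneg : -c / (2 * δ) = -(c / (2 * δ)) := by ring
    nlinarith [hfδ x]
  -- Step 2: the family of global solutions through `(n, R₀)`
  choose ρ hρT hρd hρband hρgrow using fun n : ℕ =>
    exists_global_sol f hf hlip hδ hδδ' hδ'R₀ hnegδ' hlarge hK hbdd (n : ℝ)
  have hρpos : ∀ (n : ℕ) (x : ℝ), δ' ≤ ρ n x := by
    intro n x
    rcases le_total x (n : ℝ) with h | h
    · exact (hρband n x h).1
    · have h1 := (hρgrow n x h).1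
      have h2 : (0 : ℝ) ≤ (x - n) / 2 := by linarith
      linarith
  have hρcont : ∀ n : ℕ, Continuous (ρ n) := by
    intro n
    have : Differentiable ℝ (ρ n) := fun x => (hρd n x).differentiableAt
    exact this.continuous
  -- Step 3: comparison of the solutions
  have hcomp : ∀ m n : ℕ, m ≤ n → ∀ t : ℝ, ρ n t ≤ ρ m t := by
    intro m n hmn t
    rcases eq_or_lt_of_le hmn with h | h
    · subst h; exact le_rfl
    have hmn' : (m : ℝ) < (n : ℝ) := by exact_mod_cast h
    rcases le_total t (m : ℝ) with ht | ht
    · by_contra hcon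
      push_neg at hcon
      have hdc : ContinuousOn (fun x => ρ n x - ρ m x) (Icc t (m : ℝ)) :=
        ((hρcont n).continuousOn).sub ((hρcont m).continuousOn)
      have hdm : ρ n (m : ℝ) - ρ m (m : ℝ) ≤ 0 := by
        have h1 : ρ n (m : ℝ) ≤ R₀ := (hρband n (m : ℝ) hmn'.le).2
        have h2 := hρT m
        linarith
      obtain ⟨w, hwmem, hw⟩ := intermediate_value_Icc' ht hdc
        (⟨hdm, by linarith⟩ : (0 : ℝ) ∈ Icc (ρ n (m:ℝ) - ρ m (m:ℝ)) (ρ n t - ρ m t))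
      have hweq : ρ n w = ρ m w := by
        have h1 : ρ n w - ρ m w = 0 := hw
        linarith
      have hEq := uniq_on f hlip hδ'pos hδ'R₀ (g₁ := ρ n) (g₂ := ρ m)
        (a := w) (b := (m : ℝ))
        ((hρcont n).continuousOn) (fun x _ => (hρd n x).hasDerivWithinAt)
        (fun x hx => ⟨hρpos n x, (hρband n x (le_trans hx.2.le hmn'.le)).2⟩)
        ((hρcont m).continuousOn) (fun x _ => (hρd m x).hasDerivWithinAt)
        (fun x hx => ⟨hρpos m x, (hρband m x hx.2.le).2⟩)
        hweq
      have hnm : ρ n (m : ℝ) = ρ m (m : ℝ) := hEq ⟨hwmem.2, le_rfl⟩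
      rw [hρT m] at hnm
      have hab := barrier_above (θ := R₀) (p := (m : ℝ)) (q := (n : ℝ))
        (fun x _ => (hρd n x).hasDerivWithinAt) (le_of_eq hnm.symm)
        (fun x _ he => by
          rw [he]
          exact lt_of_lt_of_le (by norm_num) (hlarge x R₀ le_rfl))
      have hgr := deriv_growth (m := (1 : ℝ)/2) (p := (m : ℝ)) (q := (n : ℝ))
        (fun x _ => (hρd n x).hasDerivWithinAt) (fun x hx => hlarge x _ (hab x hx))
        (n : ℝ) ⟨hmn'.le, le_rfl⟩
      rw [hρT n, hnm] at hgr
      linarith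
    · rcases le_total t (n : ℝ) with ht2 | ht2
      · have h1 : ρ n t ≤ R₀ := (hρband n t ht2).2
        have h2 := (hρgrow m t ht).1
        linarith
      · by_contra hcon
        push_neg at hcon
        have hdc : ContinuousOn (fun x => ρ n x - ρ m x) (Icc (n : ℝ) t) :=
          ((hρcont n).continuousOn).sub ((hρcont m).continuousOn)
        have hdn : ρ n (n : ℝ) - ρ m (n : ℝ) ≤ 0 := by
          have h2 := (hρgrow m (n : ℝ) hmn'.le).1
          rw [hρT n]
          linarith
        obtain ⟨w, hwmem, hw⟩ := intermediate_value_Icc ht2 hdc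
          (⟨hdn, by linarith⟩ : (0 : ℝ) ∈ Icc (ρ n (n:ℝ) - ρ m (n:ℝ)) (ρ n t - ρ m t))
        have hweq : ρ n w = ρ m w := by
          have h1 : ρ n w - ρ m w = 0 := hw
          linarith
        have hhi : δ' < R₀ + K * (t - (m : ℝ)) := by nlinarith
        have hbnd : ∀ j : ℕ, (m : ℝ) ≤ (j : ℝ) → ∀ x : ℝ, x ≤ t → ρ j x ≤ R₀ + K * (t - (m : ℝ)) := by
          intro j hj x hx
          rcases le_total x (j : ℝ) with h1 | h1
          · have := (hρband j x h1).2
            nlinarith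
          · have h2 := (hρgrow j x h1).2
            have h3 : K * (x - (j : ℝ)) ≤ K * (t - (m : ℝ)) := by
              apply mul_le_mul_of_nonneg_left _ hK.le
              linarith
            linarith
        have hEq := uniq_on f hlip hδ'pos hhi (g₁ := ρ n) (g₂ := ρ m)
          (a := w) (b := t)
          ((hρcont n).continuousOn) (fun x _ => (hρd n x).hasDerivWithinAt)
          (fun x hx => ⟨hρpos n x, hbnd n (le_of_lt hmn') x hx.2.le⟩)
          ((hρcont m).continuousOn) (fun x _ => (hρd m x).hasDerivWithinAt)
          (fun x hx => ⟨hρpos m x, hbnd m le_rfl x hx.2.le⟩)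
          hweq
        have := hEq ⟨hwmem.2, le_rfl⟩
        linarith
  -- Step 4: the horizon as the decreasing limit
  set R : ℝ → ℝ := fun t => ⨅ n : ℕ, ρ n t with hRdef
  have hbb : ∀ t : ℝ, BddBelow (range fun n : ℕ => ρ n t) := fun t =>
    ⟨δ', by rintro y ⟨n, rfl⟩; exact hρpos n t⟩
  have hRle : ∀ (t : ℝ) (n : ℕ), R t ≤ ρ n t := fun t n => ciInf_le (hbb t) n
  have hRlow : ∀ t, δ' ≤ R t := fun t => le_ciInf (fun n => hρpos n t)
  have hRup : ∀ t, R t ≤ R₀ := by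
    intro t
    have hn : t ≤ (⌈t⌉₊ : ℝ) := Nat.le_ceil t
    exact le_trans (hRle t ⌈t⌉₊) ((hρband ⌈t⌉₊ t hn).2)
  have htendsto : ∀ t, Tendsto (fun n : ℕ => ρ n t) atTop (𝓝 (R t)) := fun t =>
    tendsto_atTop_ciInf (fun a b hab => hcomp a b hab t) (hbb t)
  have hρlip : ∀ (n : ℕ) (x y : ℝ), |ρ n y - ρ n x| ≤ K * |y - x| := by
    intro n x y
    have hu : ∀ z ∈ Icc (min x y) (max x y),
        HasDerivWithinAt (ρ n) (f z (ρ n z)) (Icc (min x y) (max x y)) z :=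
      fun z _ => (hρd n z).hasDerivWithinAt
    have hbz : ∀ z ∈ Icc (min x y) (max x y), |f z (ρ n z)| ≤ K :=
      fun z _ => hbdd z _ (le_trans hδδ' (hρpos n z))
    exact deriv_lip hu hbz x ⟨min_le_left _ _, le_max_left _ _⟩ y
      ⟨min_le_right _ _, le_max_right _ _⟩
  have hRlip : ∀ x y : ℝ, |R y - R x| ≤ K * |y - x| := by
    intro x y
    have h1 : Tendsto (fun n : ℕ => |ρ n y - ρ n x|) atTop (𝓝 |R y - R x|) :=
      ((htendsto y).sub (htendsto x)).abs
    exact le_of_tendsto h1 (Eventually.of_forall fun n => hρlip n x y)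
  have hRcont : Continuous R := by
    have : LipschitzWith (Real.toNNReal K) R := by
      apply LipschitzWith.of_dist_le_mul
      intro x y
      rw [Real.dist_eq, Real.coe_toNNReal _ hK.le, Real.dist_eq]
      exact hRlip y x
    exact this.continuous
  have hRpos : ∀ y, 0 < R y := fun y => lt_of_lt_of_le hδ'pos (hRlow y)
  have hfcomp : ∀ g : ℝ → ℝ, Continuous g → (∀ y, 0 < g y) →
      Continuous (fun y => f y (g y)) := by
    intro g hg hgpos
    rw [continuous_iff_continuousAt]
    intro y
    have hopen : IsOpen ((univ : Set ℝ) ×ˢ Ioi (0 : ℝ)) := isOpen_univ.prod isOpen_Ioi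
    have hca : ContinuousAt (fun p : ℝ × ℝ => f p.1 p.2) (y, g y) :=
      hf.continuousAt (hopen.mem_nhds ⟨mem_univ _, hgpos y⟩)
    have hpair : Continuous (fun x : ℝ => (x, g x)) := by continuity
    have h2 : ContinuousAt ((fun p : ℝ × ℝ => f p.1 p.2) ∘ (fun x : ℝ => (x, g x))) y :=
      ContinuousAt.comp (g := fun p : ℝ × ℝ => f p.1 p.2) (f := fun x : ℝ => (x, g x))
        (x := y) hca hpair.continuousAt
    exact h2
  -- Step 5: the horizon solves the ODE
  have hInt : ∀ (n : ℕ) (x : ℝ), ρ n x = ρ n 0 + ∫ y in (0:ℝ)..x, f y (ρ n y) := by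
    intro n x
    have hcont := hfcomp (ρ n) (hρcont n) (fun y => lt_of_lt_of_le hδ'pos (hρpos n y))
    have h := intervalIntegral.integral_eq_sub_of_hasDerivAt (f := ρ n)
      (f' := fun y => f y (ρ n y)) (fun y _ => hρd n y) (hcont.intervalIntegrable 0 x)
    linarith
  have hRInt : ∀ x : ℝ, R x = R 0 + ∫ y in (0:ℝ)..x, f y (R y) := by
    intro x
    have hlim : Tendsto (fun n : ℕ => ∫ y in (0:ℝ)..x, f y (ρ n y)) atTop
        (𝓝 (∫ y in (0:ℝ)..x, f y (R y))) := by
      apply intervalIntegral.tendsto_integral_filter_of_dominated_convergence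
        (bound := fun _ => K)
      · exact Eventually.of_forall fun n =>
          ((hfcomp (ρ n) (hρcont n)
            (fun y => lt_of_lt_of_le hδ'pos (hρpos n y))).aestronglyMeasurable)
      · exact Eventually.of_forall fun n => (MeasureTheory.ae_of_all _ fun y _ => by
          rw [Real.norm_eq_abs]
          exact hbdd y _ (le_trans hδδ' (hρpos n y)))
      · exact intervalIntegrable_const
      · exact MeasureTheory.ae_of_all _ fun y _ => by
          have htd : Tendsto (fun n : ℕ => ((y : ℝ), ρ n y)) atTop (𝓝 (y, R y)) :=
            tendsto_const_nhds.prodMk_nhds (htendsto y)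
          have hopen : IsOpen ((univ : Set ℝ) ×ˢ Ioi (0 : ℝ)) := isOpen_univ.prod isOpen_Ioi
          have hca : ContinuousAt (fun p : ℝ × ℝ => f p.1 p.2) (y, R y) :=
            hf.continuousAt (hopen.mem_nhds ⟨mem_univ _, hRpos y⟩)
          exact (hca.tendsto).comp htd
    have h3 := htendsto x
    have h2 : Tendsto (fun n : ℕ => ρ n 0 + ∫ y in (0:ℝ)..x, f y (ρ n y)) atTop
        (𝓝 (R 0 + ∫ y in (0:ℝ)..x, f y (R y))) := (htendsto 0).add hlim
    have heqf : (fun n : ℕ => ρ n x) = fun n : ℕ => ρ n 0 + ∫ y in (0:ℝ)..x, f y (ρ n y) :=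
      funext fun n => hInt n x
    rw [heqf] at h3
    exact tendsto_nhds_unique h3 h2
  have hRd : ∀ x : ℝ, HasDerivAt R (f x (R x)) x := by
    intro x
    have hGcont : Continuous (fun y => f y (R y)) := hfcomp R hRcont hRpos
    have h1 : HasDerivAt (fun u : ℝ => ∫ y in (0:ℝ)..u, f y (R y)) (f x (R x)) x := by
      apply intervalIntegral.integral_hasDerivAt_right (hGcont.intervalIntegrable 0 x)
      · exact hGcont.stronglyMeasurableAtFilter _ _
      · exact hGcont.continuousAt
    have h2 := h1.const_add (R 0)
    apply h2.congr_of_eventuallyEq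
    exact Eventually.of_forall fun u => hRInt u
  -- Step 6: each `ρ n` is an escaping solution
  have hmem : ∀ (n : ℕ) (t : ℝ), ρ n ∈ escapingSolutions f t := by
    intro n t
    refine ⟨fun x _ => lt_of_lt_of_le hδ'pos (hρpos n x),
      fun x _ => (hρd n x).hasDerivWithinAt, ?_⟩
    have hlin : Tendsto (fun x : ℝ => R₀ + (x - (n : ℝ)) / 2) atTop atTop := by
      apply tendsto_atTop_add_const_left
      apply Tendsto.atTop_div_const (by norm_num : (0:ℝ) < 2)
      simpa [sub_eq_add_neg] using tendsto_atTop_add_const_right atTop (-(n:ℝ)) tendsto_id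
    apply tendsto_atTop_mono' atTop _ hlin
    filter_upwards [eventually_ge_atTop (n : ℝ)] with x hx
    exact (hρgrow n x hx).1
  -- Step 7: the infimum property
  refine ⟨δ', R₀, hδ'pos, by linarith, R, fun x => ⟨hRlow x, hRup x⟩, hRd, ?_⟩
  intro t
  set S := (fun r : ℝ → ℝ => r t) '' escapingSolutions f t with hSdef
  have hSne : S.Nonempty := ⟨ρ 0 t, ⟨ρ 0, hmem 0 t, rfl⟩⟩
  have hlb : ∀ y ∈ S, R t ≤ y := by
    rintro y ⟨r, hr, rfl⟩
    obtain ⟨hrpos, hrd, hrtop⟩ := hr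
    obtain ⟨T₁, hT₁⟩ := eventually_atTop.mp (hrtop.eventually_ge_atTop R₀)
    set n := ⌈max t T₁⌉₊ with hndef
    have hnt : t ≤ (n : ℝ) := le_trans (le_max_left _ _) (Nat.le_ceil _)
    have hnT₁ : T₁ ≤ (n : ℝ) := le_trans (le_max_right _ _) (Nat.le_ceil _)
    have key : ρ n t ≤ r t := by
      by_contra hcon
      push_neg at hcon
      have hrc : ContinuousOn r (Icc t (n : ℝ)) := fun x hx =>
        ((hrd x hx.1).continuousWithinAt).mono (fun z hz => (hz.1 : t ≤ z))
      have hdc : ContinuousOn (fun x => ρ n x - r x) (Icc t (n : ℝ)) :=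
        ((hρcont n).continuousOn).sub hrc
      have hdn : ρ n (n : ℝ) - r (n : ℝ) ≤ 0 := by
        have h1 := hT₁ (n : ℝ) hnT₁
        rw [hρT n]
        linarith
      obtain ⟨w, hwmem, hw⟩ := intermediate_value_Icc' hnt hdc
        (⟨hdn, by linarith⟩ : (0 : ℝ) ∈ Icc (ρ n (n:ℝ) - r (n:ℝ)) (ρ n t - r t))
      have hweq : ρ n w = r w := by
        have h1 : ρ n w - r w = 0 := hw
        linarith
      -- bounds for `r` on the compact interval
      obtain ⟨z₁, hz₁mem, hz₁⟩ := isCompact_Icc.exists_isMinOn (⟨t, ⟨le_rfl, hnt⟩⟩ :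
        (Icc t (n:ℝ)).Nonempty) hrc
      obtain ⟨z₂, hz₂mem, hz₂⟩ := isCompact_Icc.exists_isMaxOn (⟨t, ⟨le_rfl, hnt⟩⟩ :
        (Icc t (n:ℝ)).Nonempty) hrc
      set lo := min δ' (r z₁) with hlodef
      set hi := max R₀ (r z₂) + 1 with hhidef
      have hlopos : 0 < lo := lt_min hδ'pos (hrpos z₁ hz₁mem.1)
      have hlohi : lo < hi := by
        have h1 : lo ≤ δ' := min_le_left _ _
        have h2 : R₀ ≤ max R₀ (r z₂) := le_max_left _ _
        linarith
      have hmemρ : ∀ x ∈ Icc t (n : ℝ), ρ n x ∈ Icc lo hi := by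
        intro x hx
        constructor
        · exact le_trans (min_le_left _ _) (hρpos n x)
        · have := (hρband n x hx.2).2
          have h2 : R₀ ≤ max R₀ (r z₂) := le_max_left _ _
          linarith
      have hmemr : ∀ x ∈ Icc t (n : ℝ), r x ∈ Icc lo hi := by
        intro x hx
        constructor
        · exact le_trans (min_le_right _ _) (hz₁ hx)
        · have := hz₂ hx
          have h2 : r z₂ ≤ max R₀ (r z₂) := le_max_right _ _
          simp only [mem_setOf_eq] at this
          linarith
      -- backward uniqueness on `[t, w]`
      have hEq := uniq_on_left f hlip hlopos hlohi (g₁ := ρ n) (g₂ := r)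
        (a := t) (b := w)
        ((hρcont n).continuousOn) (fun x _ => (hρd n x).hasDerivWithinAt)
        (fun x hx => hmemρ x ⟨hx.1.le, le_trans hx.2 hwmem.2⟩)
        (hrc.mono (Icc_subset_Icc le_rfl hwmem.2))
        (fun x hx => ((hrd x (le_of_lt hx.1)).hasDerivAt
          (Ici_mem_nhds hx.1)).hasDerivWithinAt)
        (fun x hx => hmemr x ⟨hx.1.le, le_trans hx.2 hwmem.2⟩)
        hweq
      have := hEq ⟨le_rfl, hwmem.1⟩
      linarith
    exact le_trans (hRle t n) key
  have hS_bdd : BddBelow S := ⟨R t, hlb⟩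
  refine le_antisymm (le_csInf hSne hlb) ?_
  have : ∀ n : ℕ, sInf S ≤ ρ n t := fun n => csInf_le hS_bdd ⟨ρ n, hmem n t, rfl⟩
  exact le_ciInf this
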